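/- Upper bound by a time-shifted stationary tail: under (HP1)–(HP3), for every ε > 0 there exists N such that for all n ≥ N, all t > T_n and all y ∈ X_n, ℙ_{δ_y}(τ_{x_n} > t) ≤ (1 + ε) · ℙ_{π_n}(τ_{x_n} > t − T_n). -/

import Mathlib

open Finset Filter

/-- The kernel of the chain killed at `x`: all entries from or to `x` are set to zero.
For `y, z ≠ x` the powers of `killed P x` agree with the powers of the principal
submatrix `[P]_x` of `P` obtained by deleting the row and the column indexed by `x`. -/
def killed {n : ℕ} (P : Matrix (Fin n) (Fin n) ℝ) (x : Fin n) :
    Matrix (Fin n) (Fin n) ℝ :=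
  Matrix.of fun y z => if y = x ∨ z = x then 0 else P y z

/-- The no-hit probability `ℙ_α(τ_x > t) = Σ_{y ≠ x} Σ_{z ≠ x} α(y)·([P]_x)^t(y,z)`. -/
def noHit {n : ℕ} (P : Matrix (Fin n) (Fin n) ℝ) (x : Fin n)
    (a : Fin n → ℝ) (t : ℕ) : ℝ :=
  ∑ y ∈ Finset.univ.erase x, ∑ z ∈ Finset.univ.erase x, a y * ((killed P x) ^ t) y z

/-- The expected number of returns to `x` within time `T`:
`R_T(x) = Σ_{t=0}^{T} P^t(x,x)`. -/
def returns {n : ℕ} (P : Matrix (Fin n) (Fin n) ℝ) (x : Fin n) (T : ℕ) : ℝ :=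
  ∑ t ∈ Finset.range (T + 1), (P ^ t) x x

section Aux


variable {n : ℕ}

lemma pow_entry_nonneg {A : Matrix (Fin n) (Fin n) ℝ} (hA : ∀ y z, 0 ≤ A y z) :
    ∀ (t : ℕ) (y z : Fin n), 0 ≤ (A ^ t) y z := by
  intro t
  induction t with
  | zero =>
    intro y z
    by_cases h : y = z <;> simp [Matrix.one_apply, h]
  | succ t ih =>
    intro y z
    rw [pow_succ, Matrix.mul_apply]
    exact Finset.sum_nonneg fun w _ => mul_nonneg (ih y w) (hA w z)

lemma pow_entry_mono {A B : Matrix (Fin n) (Fin n) ℝ} (hA : ∀ y z, 0 ≤ A y z)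
    (hAB : ∀ y z, A y z ≤ B y z) :
    ∀ (t : ℕ) (y z : Fin n), (A ^ t) y z ≤ (B ^ t) y z := by
  intro t
  induction t with
  | zero => intro y z; simp
  | succ t ih =>
    intro y z
    rw [pow_succ, pow_succ, Matrix.mul_apply, Matrix.mul_apply]
    refine Finset.sum_le_sum fun w _ => ?_
    exact mul_le_mul (ih y w) (hAB w z) (hA w z)
      (pow_entry_nonneg (fun a b => le_trans (hA a b) (hAB a b)) t y w)

lemma killed_nonneg {P : Matrix (Fin n) (Fin n) ℝ} {x : Fin n}
    (hP : ∀ y z, 0 ≤ P y z) (y z : Fin n) : 0 ≤ killed P x y z := by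
  unfold killed
  by_cases h : y = x ∨ z = x <;> simp [h, hP]

lemma killed_le {P : Matrix (Fin n) (Fin n) ℝ} {x : Fin n}
    (hP : ∀ y z, 0 ≤ P y z) (y z : Fin n) : killed P x y z ≤ P y z := by
  unfold killed
  by_cases h : y = x ∨ z = x <;> simp [h, hP]

lemma killed_pow_col {P : Matrix (Fin n) (Fin n) ℝ} {x : Fin n} :
    ∀ (t : ℕ) (y : Fin n), y ≠ x → ((killed P x) ^ t) y x = 0 := by
  intro t
  induction t with
  | zero => intro y hy; simp [Matrix.one_apply, hy]
  | succ t ih =>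
    intro y hy
    rw [pow_succ, Matrix.mul_apply]
    refine Finset.sum_eq_zero fun w _ => ?_
    have : killed P x w x = 0 := by unfold killed; simp
    simp [this]

end Aux

theorem upper_bound_time_shifted_stationary_tail
    (P : (n : ℕ) → Matrix (Fin n) (Fin n) ℝ)
    (pi : (n : ℕ) → Fin n → ℝ)
    (x : (n : ℕ) → Fin n)
    (T : ℕ → ℕ) (c : ℝ)
    (hc : 2 < c)
    (hT : Filter.Tendsto T Filter.atTop Filter.atTop)
    (hnn : ∀ n : ℕ, 2 ≤ n → ∀ y z : Fin n, 0 ≤ P n y z)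
    (hrow : ∀ n : ℕ, 2 ≤ n → ∀ y : Fin n, ∑ z, P n y z = 1)
    (hirr : ∀ n : ℕ, 2 ≤ n → ∀ y z : Fin n, ∃ t : ℕ, 0 < (P n ^ t) y z)
    (hpinn : ∀ n : ℕ, 2 ≤ n → ∀ y : Fin n, 0 ≤ pi n y)
    (hpisum : ∀ n : ℕ, 2 ≤ n → ∑ y, pi n y = 1)
    (hpistat : ∀ n : ℕ, 2 ≤ n → Matrix.vecMul (pi n) (P n) = pi n)
    (hpiuniq : ∀ n : ℕ, 2 ≤ n → ∀ rho : Fin n → ℝ, (∀ y, 0 ≤ rho y) →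
      (∑ y, rho y = 1) → Matrix.vecMul rho (P n) = rho → rho = pi n)
    (hkirr : ∀ n : ℕ, 2 ≤ n → ∀ y z : Fin n, y ≠ x n → z ≠ x n →
      ∃ t : ℕ, 0 < ((killed (P n) (x n)) ^ t) y z)
    (HP1 : ∀ ε : ℝ, 0 < ε → ∃ N : ℕ, ∀ n : ℕ, N ≤ n → ∀ y z : Fin n,
      (n : ℝ) ^ c * |(P n ^ T n) y z - pi n z| < ε)
    (HP2 : ∀ ε : ℝ, 0 < ε → ∃ N : ℕ, ∀ n : ℕ, N ≤ n → ∀ y : Fin n,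
      (T n : ℝ) * pi n y < ε)
    (HP3 : ∀ M : ℝ, ∃ N : ℕ, ∀ n : ℕ, N ≤ n → ∀ y : Fin n,
      M < (n : ℝ) ^ 2 * pi n y)
    :
    ∀ ε : ℝ, 0 < ε → ∃ N : ℕ, ∀ n : ℕ, N ≤ n → ∀ t : ℕ, T n < t → ∀ y : Fin n,
      noHit (P n) (x n) (fun z => if z = y then (1 : ℝ) else 0) t
        ≤ (1 + ε) * noHit (P n) (x n) (pi n) (t - T n) := by
  intro ε hε
  obtain ⟨N1, hN1⟩ := HP1 ε hε
  obtain ⟨N3, hN3⟩ := HP3 1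
  refine ⟨max (max N1 N3) 2, fun n hn t ht y => ?_⟩
  have hn2 : 2 ≤ n := le_trans (le_max_right _ 2) hn
  have hnN1 : N1 ≤ n := le_trans (le_trans (le_max_left _ _) (le_max_left _ _)) hn
  have hnN3 : N3 ≤ n := le_trans (le_trans (le_max_right _ _) (le_max_left _ _)) hn
  set K : Matrix (Fin n) (Fin n) ℝ := killed (P n) (x n) with hK
  have hPnn : ∀ y z : Fin n, 0 ≤ P n y z := hnn n hn2
  have hKnn : ∀ y z : Fin n, 0 ≤ K y z := killed_nonneg hPnn
  have hKle : ∀ y z : Fin n, K y z ≤ P n y z := killed_le hPnn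
  have hKp : ∀ (s : ℕ) (y z : Fin n), 0 ≤ (K ^ s) y z := pow_entry_nonneg hKnn
  set u : ℕ := t - T n with hu
  -- positivity of RHS factor
  have hRHSnn : 0 ≤ noHit (P n) (x n) (pi n) u := by
    refine Finset.sum_nonneg fun w _ => Finset.sum_nonneg fun z _ => ?_
    exact mul_nonneg (hpinn n hn2 w) (hKp u w z)
  by_cases hyx : y = x n
  · -- delta at the killed state: LHS is zero
    have hL : noHit (P n) (x n) (fun z => if z = y then (1:ℝ) else 0) t = 0 := by
      refine Finset.sum_eq_zero fun w hw => ?_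
      have hwx : w ≠ x n := (Finset.mem_erase.1 hw).1
      have : w ≠ y := by rw [hyx]; exact hwx
      simp [this]
    rw [hL]
    exact mul_nonneg (by linarith) hRHSnn
  · -- key entrywise bound
    have hkey : ∀ y' w : Fin n, (P n ^ T n) y' w ≤ (1 + ε) * pi n w := by
      intro y' w
      have h1 := hN1 n hnN1 y' w
      have h3 := hN3 n hnN3 w
      have hn1 : (1 : ℝ) ≤ (n : ℝ) := by exact_mod_cast le_trans (by norm_num) hn2
      have hnpos : (0 : ℝ) < (n : ℝ) := lt_of_lt_of_le one_pos hn1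
      have hcpos : (0 : ℝ) < (n : ℝ) ^ c := Real.rpow_pos_of_pos hnpos c
      have hsq : ((n : ℝ) ^ 2 : ℝ) ≤ (n : ℝ) ^ c := by
        have := Real.rpow_le_rpow_of_exponent_le hn1 (le_of_lt hc)
        rwa [show ((2:ℝ)) = ((2:ℕ):ℝ) by norm_num, Real.rpow_natCast] at this
      have hsqpos : (0 : ℝ) < ((n : ℝ) ^ 2 : ℝ) := by positivity
      have hab : |(P n ^ T n) y' w - pi n w| < ε / (n : ℝ) ^ c := by
        rw [lt_div_iff₀ hcpos]; linarith [h1]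
      have hd : (P n ^ T n) y' w - pi n w < ε / (n : ℝ) ^ c :=
        lt_of_le_of_lt (le_abs_self _) hab
      have h4 : ε / (n : ℝ) ^ c ≤ ε / (n : ℝ) ^ 2 :=
        div_le_div_of_nonneg_left (le_of_lt hε) hsqpos hsq
      have h5 : ε / (n : ℝ) ^ 2 < ε * pi n w := by
        rw [div_lt_iff₀ hsqpos]
        have : (1:ℝ) * ε < ((n : ℝ) ^ 2 * pi n w) * ε := by
          exact mul_lt_mul_of_pos_right h3 hε
        linarith
      nlinarith
    have hTle : T n ≤ t := le_of_lt ht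
    have htu : T n + u = t := by omega
    have hy' : y ∈ Finset.univ.erase (x n) := Finset.mem_erase.2 ⟨hyx, Finset.mem_univ y⟩
    -- LHS = ∑_{z≠x} (K^t) y z
    have hL : noHit (P n) (x n) (fun z => if z = y then (1:ℝ) else 0) t
        = ∑ z ∈ Finset.univ.erase (x n), (K ^ t) y z := by
      unfold noHit
      rw [Finset.sum_eq_single_of_mem y hy']
      · simp [hK]
      · intro b _ hb
        simp [hb]
    rw [hL]
    -- decompose K^t
    have hdec : ∀ z : Fin n, (K ^ t) y z
        = ∑ w ∈ Finset.univ.erase (x n), (K ^ T n) y w * (K ^ u) w z := by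
      intro z
      rw [← htu, pow_add, Matrix.mul_apply]
      refine (Finset.sum_subset (Finset.subset_univ _) fun w _ hw => ?_).symm
      have hwx : w = x n := by
        by_contra h
        exact hw (Finset.mem_erase.2 ⟨h, Finset.mem_univ w⟩)
      rw [hwx, killed_pow_col (T n) y hyx, zero_mul]
    calc ∑ z ∈ Finset.univ.erase (x n), (K ^ t) y z
        = ∑ w ∈ Finset.univ.erase (x n), (K ^ T n) y w *
            ∑ z ∈ Finset.univ.erase (x n), (K ^ u) w z := by
          simp_rw [hdec]
          rw [Finset.sum_comm]
          simp_rw [Finset.mul_sum]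
      _ ≤ ∑ w ∈ Finset.univ.erase (x n), ((1 + ε) * pi n w) *
            ∑ z ∈ Finset.univ.erase (x n), (K ^ u) w z := by
          refine Finset.sum_le_sum fun w _ => ?_
          refine mul_le_mul_of_nonneg_right ?_
            (Finset.sum_nonneg fun z _ => hKp u w z)
          exact le_trans (pow_entry_mono hKnn hKle (T n) y w) (hkey y w)
      _ = (1 + ε) * noHit (P n) (x n) (pi n) u := by
          unfold noHit
          rw [Finset.mul_sum]
          refine Finset.sum_congr rfl fun w _ => ?_
          rw [Finset.mul_sum, Finset.mul_sum]
          exact Finset.sum_congr rfl fun z _ => by ring
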